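/- arXiv:1312.2027 — 2 statements merged into one kernel-verified Lean document; each statement's English description precedes it below -/
import Mathlib

section
/- Let A = [[0,0],[1,0]] and B = [[0,1],[0,2]], and for λ ≠ 0 set P(λ) = −λ·I + B·γ((A−B)/λ), where γ(N) = Σ_{k≥0} N^k/(k+1)!. Then det(P(λ)) = e^{−1/λ} · λ · (λ−1); in particular λ = 1 is the unique nonzero root of det(P(λ)) = 0. -/
attribute [local instance] Matrix.linftyOpNormedRing Matrix.linftyOpNormedAlgebra

/-- γ(N) = Σ_{k≥0} N^k/(k+1)! (which equals ∫₀¹ e^{N·t} dt). -/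
noncomputable def matGamma (N : Matrix (Fin 2) (Fin 2) ℝ) : Matrix (Fin 2) (Fin 2) ℝ :=
  ∑' k : ℕ, (((k + 1).factorial : ℝ))⁻¹ • N ^ k

lemma sumA (x : ℝ) : Summable (fun k : ℕ => (((k + 1).factorial : ℝ))⁻¹ * x ^ k) := by
  apply Summable.of_norm_bounded (Real.summable_pow_div_factorial |x|)
  intro k
  have h1 : (0:ℝ) < (k.factorial : ℝ) := by positivity
  have h2 : (k.factorial : ℝ) ≤ ((k+1).factorial : ℝ) := by
    exact_mod_cast Nat.factorial_le (Nat.le_succ k)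
  rw [norm_mul, norm_inv, Real.norm_natCast, norm_pow, Real.norm_eq_abs]
  rw [div_eq_mul_inv, mul_comm]
  gcongr

lemma sumB (x : ℝ) : Summable (fun k : ℕ => (((k + 1).factorial : ℝ))⁻¹ * ((k : ℝ) * x ^ k)) := by
  apply Summable.of_norm_bounded (Real.summable_pow_div_factorial |x|)
  intro k
  have h1 : (0:ℝ) < (k.factorial : ℝ) := by positivity
  have h3 : (0:ℝ) < ((k+1).factorial : ℝ) := by positivity
  have h2 : ((k+1).factorial : ℝ) = ((k:ℝ)+1) * (k.factorial : ℝ) := by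
    rw [Nat.factorial_succ]; push_cast; ring
  have hx : (0:ℝ) ≤ |x| ^ k := by positivity
  simp only [norm_mul, norm_inv, norm_pow, Real.norm_natCast, Real.norm_eq_abs, Nat.abs_cast]
  rw [div_eq_mul_inv, mul_comm (|x|^k), ← mul_assoc]
  apply mul_le_mul_of_nonneg_right _ hx
  rw [h2, mul_inv, inv_mul_eq_div, div_mul_eq_mul_div]
  rw [div_le_iff₀ (by positivity : (0:ℝ) < (k:ℝ)+1)]
  nlinarith [inv_nonneg.2 h1.le]

lemma S1_val (x : ℝ) :
    x * (∑' k : ℕ, (((k + 1).factorial : ℝ))⁻¹ * x ^ k) = Real.exp x - 1 := by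
  rw [← tsum_mul_left]
  rw [tsum_congr (fun k : ℕ => by
    rw [div_eq_mul_inv] <;> ring :
    ∀ k : ℕ, x * ((((k + 1).factorial : ℝ))⁻¹ * x ^ k) = x ^ (k+1) / ((k+1).factorial : ℝ))]
  have he : Real.exp x = ∑' n : ℕ, x ^ n / n.factorial := by
    rw [Real.exp_eq_exp_ℝ, NormedSpace.exp_eq_tsum_div]
  rw [he, Summable.tsum_eq_zero_add (Real.summable_pow_div_factorial x)]
  simp

lemma S2_val (x : ℝ) :
    (∑' k : ℕ, (((k + 1).factorial : ℝ))⁻¹ * ((k : ℝ) * x ^ k))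
      = Real.exp x - ∑' k : ℕ, (((k + 1).factorial : ℝ))⁻¹ * x ^ k := by
  have h1 : ∀ k : ℕ, (((k + 1).factorial : ℝ))⁻¹ * ((k : ℝ) * x ^ k)
      = x ^ k / (k.factorial : ℝ) - (((k + 1).factorial : ℝ))⁻¹ * x ^ k := by
    intro k
    have hf : ((k + 1).factorial : ℝ) = ((k : ℝ) + 1) * (k.factorial : ℝ) := by
      rw [Nat.factorial_succ]; push_cast; ring
    have h0 : (k.factorial : ℝ) ≠ 0 := by positivity
    have h0' : ((k : ℝ) + 1) ≠ 0 := by positivity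
    rw [hf]
    field_simp
    ring
  rw [tsum_congr h1, Summable.tsum_sub (Real.summable_pow_div_factorial x) (sumA x)]
  have he : Real.exp x = ∑' n : ℕ, x ^ n / n.factorial := by
    rw [Real.exp_eq_exp_ℝ, NormedSpace.exp_eq_tsum_div]
  rw [he]

lemma powN (x : ℝ) : ∀ k : ℕ, (!![0, x; -x, 2*x] : Matrix (Fin 2) (Fin 2) ℝ) ^ k
    = !![x^k - k*x^k, (k:ℝ)*x^k; -((k:ℝ)*x^k), x^k + k*x^k] := by
  intro k
  induction k with
  | zero =>
    ext i j
    fin_cases i <;> fin_cases j <;> simp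
  | succ k ih =>
    rw [pow_succ, ih, Matrix.mul_fin_two]
    ext i j
    fin_cases i <;> fin_cases j <;> (simp; push_cast; ring)

lemma gammaVal (x : ℝ) : matGamma !![0, x; -x, 2*x]
    = (∑' k : ℕ, (((k + 1).factorial : ℝ))⁻¹ * x ^ k) • (1 : Matrix (Fin 2) (Fin 2) ℝ)
      - (∑' k : ℕ, (((k + 1).factorial : ℝ))⁻¹ * ((k:ℝ) * x ^ k)) • !![1, -1; 1, -1] := by
  have hterm : ∀ k : ℕ, (((k + 1).factorial : ℝ))⁻¹ • (!![0, x; -x, 2*x] : Matrix (Fin 2) (Fin 2) ℝ) ^ k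
      = ((((k + 1).factorial : ℝ))⁻¹ * x ^ k) • (1 : Matrix (Fin 2) (Fin 2) ℝ)
        - ((((k + 1).factorial : ℝ))⁻¹ * ((k:ℝ) * x ^ k)) • !![1, -1; 1, -1] := by
    intro k
    rw [powN]
    ext i j
    fin_cases i <;> fin_cases j <;> (simp [Matrix.one_apply]; try ring)
  rw [matGamma, tsum_congr hterm,
    Summable.tsum_sub ((sumA x).smul_const _) ((sumB x).smul_const _),
    Summable.tsum_smul_const (sumA x), Summable.tsum_smul_const (sumB x)]

/-- With A = [[0,0],[1,0]], B = [[0,1],[0,2]] and P(λ) = −λ·I + B·γ((A−B)/λ) for λ ≠ 0,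
det P(λ) = e^{−1/λ} · λ · (λ−1); in particular λ = 1 is the unique nonzero root. -/
theorem stmt6 (l : ℝ) (hl : l ≠ 0) :
    let A : Matrix (Fin 2) (Fin 2) ℝ := !![0, 0; 1, 0]
    let B : Matrix (Fin 2) (Fin 2) ℝ := !![0, 1; 0, 2]
    let P : Matrix (Fin 2) (Fin 2) ℝ := -(l • 1) + B * matGamma (l⁻¹ • (A - B))
    P.det = Real.exp (-1 / l) * l * (l - 1) ∧ (P.det = 0 ↔ l = 1) := by
  intro A B P
  set x : ℝ := -l⁻¹ with hx
  have hN : l⁻¹ • (A - B) = !![0, x; -x, 2*x] := by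
    ext i j
    fin_cases i <;> fin_cases j <;> (simp [A, B, hx]; try ring)
  set S1 : ℝ := ∑' k : ℕ, (((k + 1).factorial : ℝ))⁻¹ * x ^ k with hS1def
  set S2 : ℝ := ∑' k : ℕ, (((k + 1).factorial : ℝ))⁻¹ * ((k:ℝ) * x ^ k) with hS2def
  have hexp : Real.exp x = Real.exp (-1 / l) := by rw [hx, neg_div, one_div]
  have h1 : x * S1 = Real.exp (-1 / l) - 1 := by rw [hS1def, S1_val, hexp]
  have h2 : S2 = Real.exp (-1 / l) - S1 := by rw [hS2def, S2_val, hexp]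
  have hG : matGamma (l⁻¹ • (A - B)) = !![S1 - S2, S2; -S2, S1 + S2] := by
    rw [hN, gammaVal, ← hS1def, ← hS2def]
    ext i j
    fin_cases i <;> fin_cases j <;> (simp [Matrix.one_apply]; try ring)
  have hP : P = !![-l - S2, S1 + S2; -2*S2, 2*(S1 + S2) - l] := by
    show -(l • 1) + B * matGamma (l⁻¹ • (A - B)) = _
    rw [hG]
    ext i j
    fin_cases i <;> fin_cases j <;>
      (simp [B, Matrix.mul_apply, Fin.sum_univ_two, Matrix.one_apply]; try ring)
  have hS1 : S1 = l * (1 - Real.exp (-1 / l)) := by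
    have hx0 : x = -l⁻¹ := hx
    have : (-l⁻¹) * S1 = Real.exp (-1/l) - 1 := by rw [← hx0]; exact h1
    field_simp at this
    rw [neg_div]; linarith
  have hdet : P.det = Real.exp (-1 / l) * l * (l - 1) := by
    rw [hP, Matrix.det_fin_two_of, h2, hS1]
    ring
  refine ⟨hdet, ?_⟩
  rw [hdet]
  constructor
  · intro h
    rcases mul_eq_zero.mp h with h' | h'
    · rcases mul_eq_zero.mp h' with h'' | h''
      · exact absurd h'' (Real.exp_ne_zero _)
      · exact absurd h'' hl
    · linarith
  · intro h; rw [h]; ring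
end

section
/- Let α_n = Σ 2^{dd(π)} over all permutations of [n] with no double ascents. Then for n ≥ 4, α_n equals the nearest integer to (e − 2 + 1/e) · n!. -/
open Finset
open scoped Classical

/-- π has an ascent at position i (0-indexed): π_i < π_{i+1}. -/
def Asc {n : ℕ} (π : Equiv.Perm (Fin n)) (i : ℕ) : Prop :=
  ∃ h : i + 1 < n, π ⟨i, Nat.lt_of_succ_lt h⟩ < π ⟨i + 1, h⟩

/-- π has a descent at position i (0-indexed): π_i > π_{i+1}. -/
def Desc {n : ℕ} (π : Equiv.Perm (Fin n)) (i : ℕ) : Prop :=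
  ∃ h : i + 1 < n, π ⟨i + 1, h⟩ < π ⟨i, Nat.lt_of_succ_lt h⟩

/-- The number of double descents of π: positions i with π_i > π_{i+1} > π_{i+2}. -/
noncomputable def dd {n : ℕ} (π : Equiv.Perm (Fin n)) : ℕ :=
  ((Finset.range n).filter (fun i => Desc π i ∧ Desc π (i + 1))).card

/-- π has no double ascents: no i with π_i < π_{i+1} < π_{i+2}. -/
def NoDoubleAsc {n : ℕ} (π : Equiv.Perm (Fin n)) : Prop :=
  ∀ i : ℕ, ¬ (Asc π i ∧ Asc π (i + 1))

/-- α_n = Σ 2^{dd(π)} over all permutations of [n] with no double ascents. -/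
noncomputable def alpha (n : ℕ) : ℕ :=
  ∑ π ∈ Finset.univ.filter (fun π : Equiv.Perm (Fin n) => NoDoubleAsc π), 2 ^ dd π


/-- Weight of a code list: 0 if it has a double (weak) ascent, else 2^(number of double strict descents). -/
def w : List ℕ → ℕ
  | a :: b :: c :: t => if a ≤ b ∧ b ≤ c then 0 else (if c < b ∧ b < a then 2 else 1) * w (b :: c :: t)
  | _ => 1

/-- Valid Lehmer-code lists of length n : entries `l_i ≤ n-1-i`. -/
def LL : ℕ → Finset (List ℕ)
  | 0 => {[]}
  | n+1 => ((range (n+1)) ×ˢ LL n).image fun p => p.1 :: p.2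

def hdD : List ℕ → Bool
  | a :: b :: _ => decide (b < a)
  | _ => false

def hdA : List ℕ → Bool
  | a :: b :: _ => decide (a ≤ b)
  | _ => false

def GD (n j : ℕ) : ℕ := ∑ l ∈ (LL n).filter (fun l => l.headI = j ∧ hdD l), w l
def GA (n j : ℕ) : ℕ := ∑ l ∈ (LL n).filter (fun l => l.headI = j ∧ hdA l), w l
def alphaL (n : ℕ) : ℕ := ∑ l ∈ LL n, w l

lemma sum_LL_succ (n : ℕ) (f : List ℕ → ℕ) :
    ∑ l ∈ LL (n+1), f l = ∑ a ∈ range (n+1), ∑ l ∈ LL n, f (a :: l) := by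
  rw [show LL (n+1) = ((range (n+1)) ×ˢ LL n).image fun p => p.1 :: p.2 from rfl]
  rw [Finset.sum_image (by
    intro p _ q _ h
    simp only [List.cons.injEq] at h
    exact Prod.ext h.1 h.2)]
  rw [Finset.sum_product]

lemma length_mem_LL {n : ℕ} {l : List ℕ} (h : l ∈ LL n) : l.length = n := by
  induction n generalizing l with
  | zero => simp [LL] at h; simp [h]
  | succ m ih =>
    rw [show LL (m+1) = ((range (m+1)) ×ˢ LL m).image fun p => p.1 :: p.2 from rfl] at h
    simp only [Finset.mem_image, Finset.mem_product] at h
    obtain ⟨p, ⟨_, hp2⟩, rfl⟩ := h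
    simp [ih hp2]

lemma headI_mem_LL {n : ℕ} {l : List ℕ} (h : l ∈ LL (n+1)) : l.headI ≤ n := by
  rw [show LL (n+1) = ((range (n+1)) ×ˢ LL n).image fun p => p.1 :: p.2 from rfl] at h
  simp only [Finset.mem_image, Finset.mem_product, Finset.mem_range] at h
  obtain ⟨p, ⟨hp1, _⟩, rfl⟩ := h
  simpa using Nat.lt_succ_iff.mp hp1

lemma exists_cons_of_mem_LL {n : ℕ} {l : List ℕ} (h : l ∈ LL n) (hn : 2 ≤ n) :
    ∃ b c t, l = b :: c :: t := by
  have hl := length_mem_LL h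
  match l, hl with
  | b :: c :: t, _ => exact ⟨b, c, t, rfl⟩
  | [b], hl => simp at hl; omega
  | [], hl => simp at hl; omega

lemma hdA_eq_not_hdD {b c : ℕ} {t : List ℕ} : hdA (b :: c :: t) = !hdD (b :: c :: t) := by
  simp only [hdA, hdD, ← decide_not]
  exact decide_eq_decide.mpr (by omega)

-- weight lemmas
lemma w_cons_desc {j b c : ℕ} {t : List ℕ} (h : b < j) :
    w (j :: b :: c :: t) = (if hdD (b :: c :: t) then 2 else 1) * w (b :: c :: t) := by
  rw [show w (j :: b :: c :: t) = if j ≤ b ∧ b ≤ c then 0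
      else (if c < b ∧ b < j then 2 else 1) * w (b :: c :: t) from rfl]
  rw [if_neg (by omega)]
  by_cases hcb : c < b
  · rw [if_pos ⟨hcb, h⟩, if_pos (by simp [hdD, hcb])]
  · rw [if_neg (by tauto), if_neg (by simp [hdD, hcb])]

lemma w_cons_asc {j b c : ℕ} {t : List ℕ} (h : j ≤ b) :
    w (j :: b :: c :: t) = if hdA (b :: c :: t) then 0 else w (b :: c :: t) := by
  rw [show w (j :: b :: c :: t) = if j ≤ b ∧ b ≤ c then 0
      else (if c < b ∧ b < j then 2 else 1) * w (b :: c :: t) from rfl]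
  by_cases hbc : b ≤ c
  · rw [if_pos ⟨h, hbc⟩, if_pos (by simp [hdA, hbc])]
  · have h1 : ¬(j ≤ b ∧ b ≤ c) := fun hh => hbc hh.2
    have h2 : ¬(c < b ∧ b < j) := fun hh => absurd hh.2 (Nat.not_lt.mpr h)
    have h3 : hdA (b::c::t) = false := by simp [hdA, hbc]
    rw [if_neg h1, if_neg h2, h3, one_mul]
    simp

lemma class_split (n j : ℕ) (hn : 2 ≤ n) (g : List ℕ → ℕ) :
    ∑ l ∈ (LL n).filter (fun l => l.headI = j), g l
      = (∑ l ∈ (LL n).filter (fun l => l.headI = j ∧ hdD l), g l)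
        + ∑ l ∈ (LL n).filter (fun l => l.headI = j ∧ hdA l), g l := by
  rw [← Finset.sum_filter_add_sum_filter_not ((LL n).filter (fun l => l.headI = j))
    (fun l => hdD l = true) g]
  congr 1
  · rw [Finset.filter_filter]
  · rw [Finset.filter_filter]
    apply Finset.sum_congr _ (fun _ _ => rfl)
    apply Finset.filter_congr
    intro l hl
    obtain ⟨b, c, t, rfl⟩ := exists_cons_of_mem_LL hl hn
    rw [hdA_eq_not_hdD]
    simp

lemma fiber_regroup (n : ℕ) (hn : 1 ≤ n) (p : ℕ → Bool) (g : List ℕ → ℕ) :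
    ∑ l ∈ LL n, (if p l.headI then g l else 0)
      = ∑ j' ∈ (range n).filter (fun x => p x), ∑ l ∈ (LL n).filter (fun l => l.headI = j'), g l := by
  rw [← Finset.sum_filter]
  rw [← Finset.sum_fiberwise_of_maps_to (g := List.headI) (t := (range n).filter (fun x => p x)) ?mapsto]
  case mapsto =>
    intro l hl
    rw [Finset.mem_filter] at hl ⊢
    obtain ⟨m, rfl⟩ : ∃ m, n = m + 1 := ⟨n - 1, by omega⟩
    exact ⟨Finset.mem_range.mpr (Nat.lt_succ_of_le (headI_mem_LL hl.1)), hl.2⟩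
  apply Finset.sum_congr rfl
  intro j' hj'
  rw [Finset.mem_filter] at hj'
  rw [Finset.filter_filter]
  apply Finset.sum_congr _ (fun _ _ => rfl)
  apply Finset.filter_congr
  intro l hl
  constructor
  · intro h; exact h.2
  · intro h; exact ⟨by rw [h]; exact hj'.2, h⟩

lemma GD_rec (n j : ℕ) (hn : 2 ≤ n) (hj : j ≤ n) :
    GD (n+1) j = ∑ j' ∈ range j, (2 * GD n j' + GA n j') := by
  rw [GD, Finset.sum_filter, sum_LL_succ]
  have hstep : ∀ a ∈ range (n+1), a ≠ j →
      (∑ l ∈ LL n, if ((a :: l).headI = j ∧ hdD (a :: l)) then w (a :: l) else 0) = 0 := by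
    intro a _ ha
    apply Finset.sum_eq_zero
    intro l _
    rw [if_neg]
    intro hh
    exact ha (by simpa using hh.1)
  rw [Finset.sum_eq_single j hstep (fun hj' => absurd (Finset.mem_range.mpr (by omega)) hj')]
  have hterm : ∀ l ∈ LL n, (if ((j :: l).headI = j ∧ hdD (j :: l)) then w (j :: l) else 0)
      = (if (l.headI < j : Bool) then (if hdD l then 2 else 1) * w l else 0) := by
    intro l hl
    obtain ⟨b, c, t, rfl⟩ := exists_cons_of_mem_LL hl hn
    by_cases hb : b < j
    · rw [if_pos ⟨by simp, by simp [hdD, hb]⟩, if_pos (by simp [List.headI, hb]),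
        w_cons_desc hb]
    · rw [if_neg (by simp [hdD]; omega), if_neg (by simp [hb])]
  rw [Finset.sum_congr rfl hterm]
  refine Eq.trans (fiber_regroup n (by omega) (fun x => decide (x < j))
    (fun l => (if hdD l then 2 else 1) * w l)) ?_
  have hrange : (range n).filter (fun x => (x < j : Bool)) = range j := by
    ext x; simp [Finset.mem_filter, Finset.mem_range]; omega
  rw [hrange]
  apply Finset.sum_congr rfl
  intro j' _
  rw [class_split n j' hn]
  congr 1
  · rw [GD, Finset.mul_sum]
    apply Finset.sum_congr rfl
    intro l hl
    rw [Finset.mem_filter] at hl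
    rw [if_pos hl.2.2]
  · apply Finset.sum_congr rfl
    intro l hl
    rw [Finset.mem_filter] at hl
    obtain ⟨b, c, t, hbct⟩ := exists_cons_of_mem_LL hl.1 hn
    subst hbct
    have : hdD (b :: c :: t) = false := by
      have := hl.2.2
      rw [hdA_eq_not_hdD] at this
      simpa using this
    rw [this]
    simp

lemma GA_rec (n j : ℕ) (hn : 2 ≤ n) :
    GA (n+1) j = ∑ j' ∈ Icc j (n-1), GD n j' := by
  rw [GA, Finset.sum_filter, sum_LL_succ]
  have hstep : ∀ a ∈ range (n+1), a ≠ j →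
      (∑ l ∈ LL n, if ((a :: l).headI = j ∧ hdA (a :: l)) then w (a :: l) else 0) = 0 := by
    intro a _ ha
    apply Finset.sum_eq_zero
    intro l _
    rw [if_neg]
    intro hh
    exact ha (by simpa using hh.1)
  by_cases hjn : j ≤ n
  · rw [Finset.sum_eq_single j hstep (fun hj' => absurd (Finset.mem_range.mpr (by omega)) hj')]
    have hterm : ∀ l ∈ LL n, (if ((j :: l).headI = j ∧ hdA (j :: l)) then w (j :: l) else 0)
        = (if (j ≤ l.headI : Bool) then (if hdA l then 0 else w l) else 0) := by
      intro l hl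
      obtain ⟨b, c, t, rfl⟩ := exists_cons_of_mem_LL hl hn
      by_cases hb : j ≤ b
      · rw [if_pos ⟨by simp, by simp [hdA, hb]⟩, if_pos (by simp [List.headI, hb]),
          w_cons_asc hb]
      · rw [if_neg (by simp [hdA]; omega), if_neg (by simp [hb])]
    rw [Finset.sum_congr rfl hterm]
    refine Eq.trans (fiber_regroup n (by omega) (fun x => decide (j ≤ x))
      (fun l => (if hdA l then 0 else w l))) ?_
    have hrange : (range n).filter (fun x => (j ≤ x : Bool)) = Icc j (n-1) := by
      ext x; simp [Finset.mem_filter, Finset.mem_range, Finset.mem_Icc]; omega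
    rw [hrange]
    apply Finset.sum_congr rfl
    intro j' _
    rw [class_split n j' hn, GD]
    have hA0 : ∑ l ∈ (LL n).filter (fun l => l.headI = j' ∧ hdA l), (if hdA l then 0 else w l) = 0 := by
      apply Finset.sum_eq_zero
      intro l hl
      rw [Finset.mem_filter] at hl
      rw [if_pos hl.2.2]
    have hD : ∑ l ∈ (LL n).filter (fun l => l.headI = j' ∧ hdD l), (if hdA l then 0 else w l)
        = ∑ l ∈ (LL n).filter (fun l => l.headI = j' ∧ hdD l), w l := by
      apply Finset.sum_congr rfl
      intro l hl
      rw [Finset.mem_filter] at hl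
      obtain ⟨b, c, t, hbct⟩ := exists_cons_of_mem_LL hl.1 hn
      subst hbct
      have : hdA (b :: c :: t) = false := by
        rw [hdA_eq_not_hdD]
        simpa using hl.2.2
      rw [this]
      simp
    rw [hA0, hD, add_zero]
  · -- j > n : both sides are 0
    have h1 : Icc j (n-1) = ∅ := by
      rw [Finset.Icc_eq_empty_iff]; omega
    rw [h1, Finset.sum_empty]
    apply Finset.sum_eq_zero
    intro a ha
    apply Finset.sum_eq_zero
    intro l hl
    rw [if_neg]
    intro hh
    rw [Finset.mem_range] at ha
    have := hh.1
    simp at this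
    omega

lemma alphaL_split (n : ℕ) (hn : 2 ≤ n) :
    alphaL n = ∑ j ∈ range n, (GD n j + GA n j) := by
  rw [alphaL]
  refine Eq.trans (fiber_regroup n (by omega) (fun _ => true) w) ?_
  have hrange : (range n).filter (fun _ => (true : Bool)) = range n := by
    simp
  rw [hrange]
  apply Finset.sum_congr rfl
  intro j _
  rw [class_split n j hn, GD, GA]

lemma GD20 : GD 2 0 = 0 := by decide
lemma GD21 : GD 2 1 = 1 := by decide
lemma GA20 : GA 2 0 = 1 := by decide
lemma GA21 : GA 2 1 = 0 := by decide

/-- The Lehmer code of a permutation. -/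
def code {n : ℕ} (π : Equiv.Perm (Fin n)) : List ℕ :=
  List.ofFn (fun i : Fin n => (Finset.univ.filter (fun j : Fin n => i < j ∧ π j < π i)).card)

lemma code_length {n : ℕ} (π : Equiv.Perm (Fin n)) : (code π).length = n := by
  simp [code]

lemma code_getElem {n : ℕ} (π : Equiv.Perm (Fin n)) (i : ℕ) (h : i < n) :
    (code π)[i]'(by simp only [code_length]; omega) =
      (Finset.univ.filter (fun j : Fin n => ⟨i, h⟩ < j ∧ π j < π ⟨i, h⟩)).card := by
  simp [code]

lemma mem_LL_iff {n : ℕ} (l : List ℕ) :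
    l ∈ LL n ↔ l.length = n ∧ ∀ i (h : i < l.length), l[i] + i + 1 ≤ n := by
  induction n generalizing l with
  | zero =>
    simp only [LL, Finset.mem_singleton]
    constructor
    · rintro rfl; simp
    · rintro ⟨h, -⟩; exact List.eq_nil_of_length_eq_zero h
  | succ m ih =>
    rw [show LL (m+1) = ((range (m+1)) ×ˢ LL m).image fun p => p.1 :: p.2 from rfl]
    simp only [Finset.mem_image, Finset.mem_product, Finset.mem_range, Prod.exists]
    constructor
    · rintro ⟨a, l', ⟨ha, hl'⟩, rfl⟩
      obtain ⟨hlen, hent⟩ := (ih l').mp hl'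
      refine ⟨by simp [hlen], ?_⟩
      intro i hi
      cases i with
      | zero => simp only [List.getElem_cons_zero]; omega
      | succ k =>
        simp only [List.getElem_cons_succ]
        have hk : k < l'.length := by simpa using hi
        have := hent k hk
        omega
    · rintro ⟨hlen, hent⟩
      match l, hlen with
      | a :: l', hlen =>
        refine ⟨a, l', ⟨?_, (ih l').mpr ⟨by simpa using hlen, ?_⟩⟩, rfl⟩
        · have := hent 0 (by simp)
          simp only [List.getElem_cons_zero] at this
          omega
        · intro i hi
          have := hent (i+1) (by simpa using Nat.succ_lt_succ hi)
          simp at this ⊢; omega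

lemma code_mem_LL {n : ℕ} (π : Equiv.Perm (Fin n)) : code π ∈ LL n := by
  rw [mem_LL_iff]
  refine ⟨code_length π, ?_⟩
  intro i hi
  rw [code_length] at hi
  rw [code_getElem π i hi]
  have hsub : (Finset.univ.filter (fun j : Fin n => ⟨i, hi⟩ < j ∧ π j < π ⟨i, hi⟩)).card
      ≤ (Finset.range (n - i - 1)).card := by
    apply Finset.card_le_card_of_injOn (fun j => j.val - i - 1)
    · intro j hj
      rw [Finset.mem_coe, Finset.mem_filter] at hj
      have h1 : i < j.val := hj.2.1
      have h2 : j.val < n := j.isLt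
      rw [Finset.mem_coe, Finset.mem_range]
      show j.val - i - 1 < n - i - 1
      omega
    · intro x hx y hy hxy
      rw [Finset.mem_coe, Finset.mem_filter] at hx hy
      have h1 : i < x.val := hx.2.1
      have h2 : i < y.val := hy.2.1
      simp only at hxy
      exact Fin.ext (by omega)
  rw [Finset.card_range] at hsub
  omega

section Mono
variable {n : ℕ} (π : Equiv.Perm (Fin n))

/-- If there is a descent at `i` then the code strictly descends. -/
lemma code_strict {i : ℕ} (h : i + 1 < n) (hd : π ⟨i+1, h⟩ < π ⟨i, Nat.lt_of_succ_lt h⟩) :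
    (code π)[i+1]'(by simp only [code_length]; omega) < (code π)[i]'(by simp only [code_length]; omega) := by
  rw [code_getElem π (i+1) h, code_getElem π i (Nat.lt_of_succ_lt h)]
  apply Finset.card_lt_card
  constructor
  · intro j hj
    rw [Finset.mem_filter] at hj ⊢
    refine ⟨Finset.mem_univ _, ?_, lt_trans hj.2.2 hd⟩
    have : (i+1 : ℕ) < j.val := hj.2.1
    exact (by omega : i < j.val)
  · intro hsub
    have hmem : (⟨i+1, h⟩ : Fin n) ∈ Finset.univ.filter
        (fun j : Fin n => ⟨i, Nat.lt_of_succ_lt h⟩ < j ∧ π j < π ⟨i, Nat.lt_of_succ_lt h⟩) := by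
      rw [Finset.mem_filter]
      exact ⟨Finset.mem_univ _, by simp [Fin.lt_def], hd⟩
    have := hsub hmem
    rw [Finset.mem_filter] at this
    exact absurd this.2.1 (by simp [Fin.lt_def])

/-- If there is an ascent at `i` then the code weakly ascends. -/
lemma code_weak {i : ℕ} (h : i + 1 < n) (ha : π ⟨i, Nat.lt_of_succ_lt h⟩ < π ⟨i+1, h⟩) :
    (code π)[i]'(by simp only [code_length]; omega) ≤ (code π)[i+1]'(by simp only [code_length]; omega) := by
  rw [code_getElem π (i+1) h, code_getElem π i (Nat.lt_of_succ_lt h)]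
  apply Finset.card_le_card
  intro j hj
  rw [Finset.mem_filter] at hj ⊢
  refine ⟨Finset.mem_univ _, ?_, lt_trans hj.2.2 ha⟩
  have h1 : i < j.val := hj.2.1
  have h2 : j ≠ ⟨i+1, h⟩ := by
    intro hh
    rw [hh] at hj
    exact absurd hj.2.2 (not_lt_of_gt ha)
  have h3 : j.val ≠ i+1 := fun hc => h2 (Fin.ext hc)
  exact (by omega : i + 1 < j.val)

end Mono

lemma perm_ne_succ {n : ℕ} (π : Equiv.Perm (Fin n)) {i : ℕ} (h : i + 1 < n) :
    π ⟨i, Nat.lt_of_succ_lt h⟩ ≠ π ⟨i+1, h⟩ := by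
  intro hc
  have := π.injective hc
  simp only [Fin.mk.injEq] at this
  omega

lemma desc_iff_code {n : ℕ} (π : Equiv.Perm (Fin n)) (i : ℕ) :
    Desc π i ↔ (i + 1 < n ∧ (code π).getD (i+1) 0 < (code π).getD i 0) := by
  constructor
  · rintro ⟨h, hd⟩
    refine ⟨h, ?_⟩
    rw [List.getD_eq_getElem _ _ (by simp only [code_length]; omega),
        List.getD_eq_getElem _ _ (by simp only [code_length]; omega)]
    exact code_strict π h hd
  · rintro ⟨h, hc⟩
    refine ⟨h, ?_⟩
    rcases lt_trichotomy (π ⟨i + 1, h⟩) (π ⟨i, Nat.lt_of_succ_lt h⟩) with hlt | heq | hgt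
    · exact hlt
    · exact absurd heq.symm (perm_ne_succ π h)
    · exfalso
      have := code_weak π h hgt
      rw [List.getD_eq_getElem _ _ (by simp only [code_length]; omega),
          List.getD_eq_getElem _ _ (by simp only [code_length]; omega)] at hc
      omega

lemma asc_iff_code {n : ℕ} (π : Equiv.Perm (Fin n)) (i : ℕ) :
    Asc π i ↔ (i + 1 < n ∧ (code π).getD i 0 ≤ (code π).getD (i+1) 0) := by
  constructor
  · rintro ⟨h, ha⟩
    refine ⟨h, ?_⟩
    rw [List.getD_eq_getElem _ _ (by simp only [code_length]; omega),
        List.getD_eq_getElem _ _ (by simp only [code_length]; omega)]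
    exact code_weak π h ha
  · rintro ⟨h, hc⟩
    refine ⟨h, ?_⟩
    rcases lt_trichotomy (π ⟨i, Nat.lt_of_succ_lt h⟩) (π ⟨i + 1, h⟩) with hlt | heq | hgt
    · exact hlt
    · exact absurd heq (perm_ne_succ π h)
    · exfalso
      have := code_strict π h hgt
      rw [List.getD_eq_getElem _ _ (by simp only [code_length]; omega),
          List.getD_eq_getElem _ _ (by simp only [code_length]; omega)] at hc
      omega

/-- The code entry counts smaller values not used in the strict prefix. -/
lemma code_entry_count {n : ℕ} (π : Equiv.Perm (Fin n)) (i : ℕ) (hi : i < n) :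
    (Finset.univ.filter (fun j : Fin n => ⟨i, hi⟩ < j ∧ π j < π ⟨i, hi⟩)).card
      = (Finset.univ.filter (fun v : Fin n =>
          v < π ⟨i, hi⟩ ∧ ∀ k : Fin n, k.val < i → π k ≠ v)).card := by
  apply Finset.card_bij (fun j _ => π j)
  · intro j hj
    rw [Finset.mem_filter] at hj ⊢
    refine ⟨Finset.mem_univ _, hj.2.2, ?_⟩
    intro k hk hc
    have hkj := π.injective hc
    have h1 : (i : ℕ) < j.val := hj.2.1
    rw [hkj] at hk
    omega
  · intro a _ b _ hab
    exact π.injective hab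
  · intro v hv
    rw [Finset.mem_filter] at hv
    refine ⟨π.symm v, ?_, by simp⟩
    rw [Finset.mem_filter]
    refine ⟨Finset.mem_univ _, ?_, by simp [hv.2.1]⟩
    rcases lt_trichotomy ((π.symm v).val) i with hlt | heq | hgt
    · exact absurd (by simp : π (π.symm v) = v) (hv.2.2 (π.symm v) hlt)
    · exfalso
      have h2 : (⟨i, hi⟩ : Fin n) = π.symm v := Fin.ext heq.symm
      have : π ⟨i, hi⟩ = v := by rw [h2]; simp
      rw [this] at hv
      exact absurd hv.2.1 (lt_irrefl v)
    · exact hgt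

lemma code_injective {n : ℕ} : Function.Injective (code (n := n)) := by
  intro π σ h
  have hfun := List.ofFn_inj.mp h
  have hent : ∀ i (hi : i < n),
      (Finset.univ.filter (fun j : Fin n => ⟨i, hi⟩ < j ∧ π j < π ⟨i, hi⟩)).card
        = (Finset.univ.filter (fun j : Fin n => ⟨i, hi⟩ < j ∧ σ j < σ ⟨i, hi⟩)).card := by
    intro i hi
    exact congrFun hfun ⟨i, hi⟩
  have key : ∀ i (hi : i < n), π ⟨i, hi⟩ = σ ⟨i, hi⟩ := by
    intro i
    induction i using Nat.strong_induction_on with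
    | _ i IH =>
      intro hi
      have hcount := (code_entry_count π i hi).symm.trans
        ((hent i hi).trans (code_entry_count σ i hi))
      have hpre : ∀ k : Fin n, k.val < i → σ k = π k := by
        intro k hk
        have := IH k.val hk k.isLt
        simpa [Fin.eta] using this.symm
      have hcount2 : (Finset.univ.filter (fun v : Fin n =>
            v < π ⟨i, hi⟩ ∧ ∀ k : Fin n, k.val < i → π k ≠ v)).card
          = (Finset.univ.filter (fun v : Fin n =>
            v < σ ⟨i, hi⟩ ∧ ∀ k : Fin n, k.val < i → π k ≠ v)).card := by
        rw [hcount]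
        congr 1
        apply Finset.filter_congr
        intro v _
        constructor
        · rintro ⟨h1, h2⟩; exact ⟨h1, fun k hk => (hpre k hk) ▸ h2 k hk⟩
        · rintro ⟨h1, h2⟩; exact ⟨h1, fun k hk => (hpre k hk).symm ▸ h2 k hk⟩
      have hmono : ∀ x y : Fin n, (∀ k : Fin n, k.val < i → π k ≠ x) → x < y →
          (Finset.univ.filter (fun v : Fin n => v < x ∧ ∀ k : Fin n, k.val < i → π k ≠ v)).card
            < (Finset.univ.filter (fun v : Fin n => v < y ∧ ∀ k : Fin n, k.val < i → π k ≠ v)).card := by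
        intro x y hPx hxy
        apply Finset.card_lt_card
        constructor
        · intro v hv
          rw [Finset.mem_filter] at hv ⊢
          exact ⟨Finset.mem_univ _, lt_trans hv.2.1 hxy, hv.2.2⟩
        · intro hsub
          have hx : x ∈ Finset.univ.filter
              (fun v : Fin n => v < y ∧ ∀ k : Fin n, k.val < i → π k ≠ v) := by
            rw [Finset.mem_filter]; exact ⟨Finset.mem_univ _, hxy, hPx⟩
          have := hsub hx
          rw [Finset.mem_filter] at this
          exact absurd this.2.1 (lt_irrefl x)
      have hPπ : ∀ k : Fin n, k.val < i → π k ≠ π ⟨i, hi⟩ := by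
        intro k hk hc
        have := π.injective hc
        rw [this] at hk
        simp at hk
      have hPσ : ∀ k : Fin n, k.val < i → π k ≠ σ ⟨i, hi⟩ := by
        intro k hk hc
        rw [← hpre k hk] at hc
        have := σ.injective hc
        rw [this] at hk
        simp at hk
      rcases lt_trichotomy (π ⟨i, hi⟩) (σ ⟨i, hi⟩) with hlt | heq | hgt
      · exfalso
        have := hmono _ _ hPπ hlt
        omega
      · exact heq
      · exfalso
        have := hmono _ _ hPσ hgt
        omega
  apply Equiv.ext
  intro j
  have := key j.val j.isLt
  simpa [Fin.eta] using this

lemma card_LL (n : ℕ) : (LL n).card = n.factorial := by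
  induction n with
  | zero => simp [LL]
  | succ m ih =>
    rw [show LL (m+1) = ((range (m+1)) ×ˢ LL m).image fun p => p.1 :: p.2 from rfl]
    rw [Finset.card_image_of_injective _ (by
      intro p q hpq
      simp only [List.cons.injEq] at hpq
      exact Prod.ext hpq.1 hpq.2)]
    rw [Finset.card_product, Finset.card_range, ih, Nat.factorial_succ]

lemma code_image_eq (n : ℕ) :
    (Finset.univ.image (code (n := n))) = LL n := by
  apply Finset.eq_of_subset_of_card_le
  · intro l hl
    rw [Finset.mem_image] at hl
    obtain ⟨π, _, rfl⟩ := hl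
    exact code_mem_LL π
  · rw [card_LL, Finset.card_image_of_injective _ code_injective]
    simp [Fintype.card_perm]

lemma sum_LL_eq_sum_perm (n : ℕ) (f : List ℕ → ℕ) :
    ∑ l ∈ LL n, f l = ∑ π : Equiv.Perm (Fin n), f (code π) := by
  rw [← code_image_eq n, Finset.sum_image (fun a _ b _ h => code_injective h)]

def ddTrip (l : List ℕ) (i : ℕ) : Prop :=
  i+2 < l.length ∧ l.getD (i+2) 0 < l.getD (i+1) 0 ∧ l.getD (i+1) 0 < l.getD i 0

def aaTrip (l : List ℕ) (i : ℕ) : Prop :=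
  i+2 < l.length ∧ l.getD i 0 ≤ l.getD (i+1) 0 ∧ l.getD (i+1) 0 ≤ l.getD (i+2) 0

instance (l : List ℕ) (i : ℕ) : Decidable (ddTrip l i) := by unfold ddTrip; infer_instance
instance (l : List ℕ) (i : ℕ) : Decidable (aaTrip l i) := by unfold aaTrip; infer_instance

def NL (l : List ℕ) : ℕ := ((range l.length).filter (fun i => ddTrip l i)).card

lemma ddTrip_cons_succ (a : ℕ) (l : List ℕ) (i : ℕ) :
    ddTrip (a :: l) (i+1) ↔ ddTrip l i := by
  unfold ddTrip
  rw [show (i+1)+2 = (i+2)+1 from rfl]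
  rw [List.getD_cons_succ, List.getD_cons_succ, List.getD_cons_succ, List.length_cons]
  rw [show i+1+1 = i+2 from rfl]
  omega

lemma aaTrip_cons_succ (a : ℕ) (l : List ℕ) (i : ℕ) :
    aaTrip (a :: l) (i+1) ↔ aaTrip l i := by
  unfold aaTrip
  rw [show (i+1)+2 = (i+2)+1 from rfl]
  rw [List.getD_cons_succ, List.getD_cons_succ, List.getD_cons_succ, List.length_cons]
  rw [show i+1+1 = i+2 from rfl]
  omega

lemma NL_cons (a : ℕ) (l : List ℕ) :
    NL (a :: l) = (if ddTrip (a :: l) 0 then 1 else 0) + NL l := by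
  unfold NL
  rw [Finset.card_filter, Finset.card_filter, List.length_cons, Finset.sum_range_succ', add_comm]
  congr 1
  apply Finset.sum_congr rfl
  intro i _
  congr 1
  exact propext (ddTrip_cons_succ a l i)

open scoped Classical in
lemma w_eq (l : List ℕ) :
    w l = if (∀ i, ¬ aaTrip l i) then 2 ^ (NL l) else 0 := by
  induction l with
  | nil =>
    rw [if_pos (fun i hi => absurd hi.1 (by simp [List.length]))]
    simp [w, NL]
  | cons a l IH =>
    match l with
    | [] =>
      rw [if_pos (fun i hi => by have := hi.1; simp [List.length] at this)]
      have : NL [a] = 0 := by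
        apply Finset.card_eq_zero.mpr
        apply Finset.filter_false_of_mem
        intro i _ hdd
        have := hdd.1
        simp [List.length] at this
      rw [this]
      rfl
    | [b] =>
      rw [if_pos (fun i hi => by have := hi.1; simp [List.length] at this)]
      have : NL [a, b] = 0 := by
        apply Finset.card_eq_zero.mpr
        apply Finset.filter_false_of_mem
        intro i _ hdd
        have := hdd.1
        simp [List.length] at this
      rw [this]
      rfl
    | b :: c :: t =>
      rw [show w (a :: b :: c :: t) = if a ≤ b ∧ b ≤ c then 0
          else (if c < b ∧ b < a then 2 else 1) * w (b :: c :: t) from rfl]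
      have haa0 : aaTrip (a :: b :: c :: t) 0 ↔ (a ≤ b ∧ b ≤ c) := by
        unfold aaTrip
        simp [List.length_cons]
      have hdd0 : ddTrip (a :: b :: c :: t) 0 ↔ (c < b ∧ b < a) := by
        unfold ddTrip
        simp [List.length_cons]
      have hallaa : (∀ i, ¬ aaTrip (a :: b :: c :: t) i)
          ↔ (¬ (a ≤ b ∧ b ≤ c) ∧ ∀ i, ¬ aaTrip (b :: c :: t) i) := by
        constructor
        · intro h
          exact ⟨fun hc => (h 0) (haa0.mpr hc),
            fun i hc => (h (i+1)) ((aaTrip_cons_succ _ _ i).mpr hc)⟩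
        · rintro ⟨h0, hs⟩ i
          cases i with
          | zero => intro hc; exact h0 (haa0.mp hc)
          | succ k => intro hc; exact hs k ((aaTrip_cons_succ _ _ k).mp hc)
      by_cases habc : a ≤ b ∧ b ≤ c
      · rw [if_pos habc, if_neg (by rw [hallaa]; tauto)]
      · rw [if_neg habc, IH]
        by_cases hrest : ∀ i, ¬ aaTrip (b :: c :: t) i
        · rw [if_pos hrest, if_pos (hallaa.mpr ⟨habc, hrest⟩)]
          conv_rhs => rw [NL_cons]
          by_cases hcd : c < b ∧ b < a
          · rw [if_pos (hdd0.mpr hcd), if_pos hcd, pow_add, pow_one]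
          · rw [if_neg (fun hc => hcd (hdd0.mp hc)), if_neg hcd, one_mul, zero_add]
        · rw [if_neg hrest, mul_zero, if_neg (by rw [hallaa]; tauto)]

open scoped Classical in
lemma dd_eq_NL {n : ℕ} (π : Equiv.Perm (Fin n)) : dd π = NL (code π) := by
  unfold dd NL
  rw [code_length]
  apply Finset.card_bij (fun i _ => i)
  · intro i hi
    rw [Finset.mem_filter] at hi ⊢
    obtain ⟨hir, h1, h2⟩ := hi
    obtain ⟨hlt1, hc1⟩ := (desc_iff_code π i).mp h1
    obtain ⟨hlt2, hc2⟩ := (desc_iff_code π (i+1)).mp h2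
    refine ⟨hir, ?_, ?_, hc1⟩
    · rw [code_length]; omega
    · rw [show i+1+1 = i+2 from rfl] at hc2; exact hc2
  · intro a b _ _ h; exact h
  · intro i hi
    refine ⟨i, ?_, rfl⟩
    rw [Finset.mem_filter] at hi ⊢
    obtain ⟨hir, hlen, h1, h2⟩ := hi
    rw [code_length] at hlen
    refine ⟨hir, (desc_iff_code π i).mpr ⟨by omega, h2⟩,
      (desc_iff_code π (i+1)).mpr ⟨by omega, ?_⟩⟩
    rw [show i+1+1 = i+2 from rfl]; exact h1

lemma noDoubleAsc_iff_code {n : ℕ} (π : Equiv.Perm (Fin n)) :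
    NoDoubleAsc π ↔ ∀ i, ¬ aaTrip (code π) i := by
  unfold NoDoubleAsc
  constructor
  · intro h i hTrip
    obtain ⟨hlen, h1, h2⟩ := hTrip
    rw [code_length] at hlen
    refine h i ⟨(asc_iff_code π i).mpr ⟨by omega, h1⟩,
      (asc_iff_code π (i+1)).mpr ⟨by omega, ?_⟩⟩
    rw [show i+1+1 = i+2 from rfl]; exact h2
  · intro h i ⟨h1, h2⟩
    obtain ⟨hlt1, hc1⟩ := (asc_iff_code π i).mp h1
    obtain ⟨hlt2, hc2⟩ := (asc_iff_code π (i+1)).mp h2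
    refine h i ⟨by rw [code_length]; omega, hc1, ?_⟩
    rw [show i+1+1 = i+2 from rfl] at hc2; exact hc2

open scoped Classical in
lemma alpha_transfer (n : ℕ) :
    (∑ π ∈ Finset.univ.filter (fun π : Equiv.Perm (Fin n) => NoDoubleAsc π), 2 ^ dd π)
      = ∑ l ∈ LL n, w l := by
  rw [Finset.sum_filter, sum_LL_eq_sum_perm n w]
  apply Finset.sum_congr rfl
  intro π _
  rw [w_eq (code π), dd_eq_NL]
  by_cases h : NoDoubleAsc π
  · rw [if_pos h, if_pos ((noDoubleAsc_iff_code π).mp h)]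
  · rw [if_neg h, if_neg (fun hc => h ((noDoubleAsc_iff_code π).mpr hc))]

def yh (m : ℕ) : ℤ :=
  ∑ t ∈ Icc 1 (m-1), (-1:ℤ)^(t+1) * (Nat.descFactorial (m-1) (m-1-t) : ℤ)

def Fd (n j : ℕ) : ℤ :=
  (∑ k ∈ Icc 1 (n-2), (k : ℤ) * yh (n-k) * (j.choose k : ℤ)) + (j.choose (n-1) : ℤ)

lemma descFactorial_cast_rat {n s : ℕ} (h : s ≤ n) :
    (Nat.descFactorial n (n - s) : ℚ) = (n.factorial : ℚ) / (s.factorial : ℚ) := by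
  have h2 : Nat.factorial (n - (n - s)) * n.descFactorial (n - s) = n.factorial :=
    Nat.factorial_mul_descFactorial (Nat.sub_le n s)
  rw [Nat.sub_sub_self h] at h2
  have h3 : (s.factorial : ℚ) * (n.descFactorial (n - s) : ℚ) = (n.factorial : ℚ) := by
    exact_mod_cast h2
  have hs : (s.factorial : ℚ) ≠ 0 := by positivity
  field_simp
  linarith [h3]

lemma yh_cast (m : ℕ) :
    (yh m : ℚ) = ∑ t ∈ Icc 1 (m-1), (-1:ℚ)^(t+1) * ((m-1).factorial / t.factorial) := by
  rw [yh]
  push_cast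
  apply Finset.sum_congr rfl
  intro t ht
  rw [Finset.mem_Icc] at ht
  rw [descFactorial_cast_rat ht.2]

lemma hockey (j k : ℕ) : ∑ j' ∈ range j, (j'.choose k : ℤ) = (j.choose (k+1) : ℤ) := by
  induction j with
  | zero => simp
  | succ m ih =>
    rw [Finset.sum_range_succ, ih, Nat.choose_succ_succ' m k]
    push_cast
    ring

/-- The triangle double sum. -/
def Pq (n c : ℕ) : ℚ :=
  ∑ k ∈ Icc 1 (c-1), ∑ t ∈ Icc 1 (c-k),
    (-1:ℚ)^(t+1) * ((n.factorial : ℚ) / (k.factorial * t.factorial))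

lemma alt_choose_Icc (c : ℕ) :
    ∑ k ∈ Icc 1 c, (-1:ℤ)^k * ((c+1).choose k : ℤ) = -1 - (-1)^(c+1) := by
  have h := Int.alternating_sum_range_choose_of_ne (n := c+1) (by omega)
  rw [Finset.sum_range_succ] at h
  rw [Finset.range_eq_Ico, Finset.sum_eq_sum_Ico_succ_bot (by omega)] at h
  rw [show (0:ℕ)+1 = 1 from rfl, Finset.Ico_add_one_right_eq_Icc] at h
  simp only [pow_zero, Nat.choose_zero_right, Nat.choose_self, Nat.cast_one, one_mul, mul_one] at h
  linarith [h]

lemma Pq_succ (n c : ℕ) :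
    Pq n (c+1) = Pq n c + (1 + (-1:ℚ)^(c+1)) * ((n.factorial : ℚ) / (c+1).factorial) := by
  rcases Nat.eq_zero_or_pos c with rfl | hc
  · simp [Pq]
  -- c ≥ 1
  rw [Pq, Pq, show c+1-1 = c from rfl]
  have hsplit : ∀ k ∈ Icc 1 c, (∑ t ∈ Icc 1 (c+1-k),
      (-1:ℚ)^(t+1) * ((n.factorial : ℚ) / (k.factorial * t.factorial)))
      = (∑ t ∈ Icc 1 (c-k), (-1:ℚ)^(t+1) * ((n.factorial : ℚ) / (k.factorial * t.factorial)))
        + (-1:ℚ)^(c+1-k+1) * ((n.factorial : ℚ) / (k.factorial * (c+1-k).factorial)) := by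
    intro k hk
    rw [Finset.mem_Icc] at hk
    rw [show c+1-k = (c-k)+1 from by omega]
    rw [Finset.sum_Icc_succ_top (by omega)]
  rw [Finset.sum_congr rfl hsplit, Finset.sum_add_distrib]
  have hfirst : ∑ k ∈ Icc 1 c, (∑ t ∈ Icc 1 (c-k),
      (-1:ℚ)^(t+1) * ((n.factorial : ℚ) / (k.factorial * t.factorial)))
      = ∑ k ∈ Icc 1 (c-1), ∑ t ∈ Icc 1 (c-k),
        (-1:ℚ)^(t+1) * ((n.factorial : ℚ) / (k.factorial * t.factorial)) := by
    rcases Nat.eq_zero_or_pos (c-1) with h1 | h1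
    · have : c = 1 := by omega
      subst this
      simp
    · rw [show Icc 1 c = insert c (Icc 1 (c-1)) from by
        ext x; simp [Finset.mem_Icc, Finset.mem_insert]; omega]
      rw [Finset.sum_insert (by simp [Finset.mem_Icc]; omega)]
      rw [show c - c = 0 from by omega]
      simp
  rw [hfirst]
  congr 1
  -- the diagonal
  have hsq : (-1:ℚ)^c * (-1:ℚ)^c = 1 := by
    rw [← pow_add, show c+c = 2*c from by omega, pow_mul]
    norm_num
  have hexp : (-1:ℚ)^(c+1) = -((-1:ℚ)^c) := by
    rw [pow_succ]; ring
  have hdiag : ∀ k ∈ Icc 1 c,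
      (-1:ℚ)^(c+1-k+1) * ((n.factorial : ℚ) / (k.factorial * (c+1-k).factorial))
      = ((n.factorial : ℚ) / (c+1).factorial) * ((-1:ℚ)^(c+k) * (((c+1).choose k : ℕ) : ℚ)) := by
    intro k hk
    rw [Finset.mem_Icc] at hk
    have hkc : k ≤ c+1 := by omega
    rw [Nat.cast_choose ℚ hkc]
    have h1 : ((k.factorial : ℚ)) ≠ 0 := by positivity
    have h2 : (((c+1-k).factorial : ℚ)) ≠ 0 := by positivity
    have h3 : (((c+1).factorial : ℚ)) ≠ 0 := by positivity
    have hsign : (-1:ℚ)^(c+1-k+1) = (-1:ℚ)^(c+k) := by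
      have ha : (-1:ℚ)^(c+1-k+1) * (-1:ℚ)^(c+k) = 1 := by
        rw [← pow_add, show c+1-k+1 + (c+k) = 2*(c+1) from by omega, pow_mul]
        norm_num
      have hb : (-1:ℚ)^(c+k) * (-1:ℚ)^(c+k) = 1 := by
        rw [← pow_add, show c+k+(c+k) = 2*(c+k) from by omega, pow_mul]
        norm_num
      calc (-1:ℚ)^(c+1-k+1) = (-1:ℚ)^(c+1-k+1) * ((-1:ℚ)^(c+k) * (-1:ℚ)^(c+k)) := by
            rw [hb]; ring
        _ = ((-1:ℚ)^(c+1-k+1) * (-1:ℚ)^(c+k)) * (-1:ℚ)^(c+k) := by ring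
        _ = (-1:ℚ)^(c+k) := by rw [ha]; ring
    rw [hsign]
    field_simp
  rw [Finset.sum_congr rfl hdiag, ← Finset.mul_sum]
  have hfac : ∑ k ∈ Icc 1 c, ((-1:ℚ)^(c+k) * (((c+1).choose k : ℕ) : ℚ))
      = (-1:ℚ)^c * ∑ k ∈ Icc 1 c, ((-1:ℚ)^k * (((c+1).choose k : ℕ) : ℚ)) := by
    rw [Finset.mul_sum]
    apply Finset.sum_congr rfl
    intro k _
    rw [pow_add]
    ring
  have hcast : ∑ k ∈ Icc 1 c, ((-1:ℚ)^k * (((c+1).choose k : ℕ) : ℚ))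
      = ((∑ k ∈ Icc 1 c, (-1:ℤ)^k * ((c+1).choose k : ℤ) : ℤ) : ℚ) := by
    push_cast
    rfl
  rw [hfac, hcast, alt_choose_Icc c]
  push_cast
  rw [hexp]
  have : (-1:ℚ)^c * (-1 - -(-1:ℚ)^c) = 1 + -(-1:ℚ)^c := by
    nlinarith [hsq]
  rw [this]
  ring

lemma Pq_eval (n c : ℕ) :
    Pq n c = ∑ s ∈ Icc 2 c, (1 + (-1:ℚ)^s) * ((n.factorial : ℚ) / s.factorial) := by
  induction c with
  | zero => simp [Pq]
  | succ m ih =>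
    rw [Pq_succ, ih]
    rcases Nat.lt_or_ge m 1 with hm | hm
    · interval_cases m
      norm_num
    · rw [Finset.sum_Icc_succ_top (by omega : 2 ≤ m+1)]

lemma T_eval (n : ℕ) (hn : 1 ≤ n) :
    ∑ j ∈ range n, Fd n j
      = (∑ k ∈ Icc 1 (n-2), (k:ℤ) * yh (n-k) * (n.choose (k+1) : ℤ)) + (n.choose n : ℤ) := by
  unfold Fd
  rw [Finset.sum_add_distrib, Finset.sum_comm]
  congr 1
  · apply Finset.sum_congr rfl
    intro k _
    rw [← Finset.mul_sum, hockey n k]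
  · rw [hockey n (n-1), show n-1+1 = n from by omega]

lemma key_frac {n k t : ℕ} (hk1 : 1 ≤ k) (hk2 : k ≤ n - 2) (hn : 2 ≤ n) :
    (k:ℚ) * ((n.choose (k+1) : ℕ) : ℚ) * (((n-k-1).factorial : ℚ) / (t.factorial : ℚ))
      = (n.factorial : ℚ) / ((k.factorial : ℚ) * (t.factorial : ℚ))
        - (n.factorial : ℚ) / (((k+1).factorial : ℚ) * (t.factorial : ℚ)) := by
  have hkn : k + 1 ≤ n := by omega
  rw [Nat.cast_choose ℚ hkn]
  rw [show n - (k+1) = n-k-1 from by omega]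
  rw [Nat.factorial_succ]
  have h1 : ((k.factorial : ℚ)) ≠ 0 := by positivity
  have h2 : ((t.factorial : ℚ)) ≠ 0 := by positivity
  have h3 : (((n-k-1).factorial : ℚ)) ≠ 0 := by positivity
  have h4 : ((k:ℚ) + 1) ≠ 0 := by positivity
  push_cast
  field_simp
  ring

lemma A_identity (n : ℕ) (hn : 2 ≤ n) :
    ∑ j ∈ range n, Fd n j = yh (n+1) := by
  have hQ : ((∑ j ∈ range n, Fd n j : ℤ) : ℚ) = ((yh (n+1) : ℤ) : ℚ) → 
      ∑ j ∈ range n, Fd n j = yh (n+1) := fun h => by exact_mod_cast h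
  apply hQ
  rw [T_eval n (by omega), Nat.choose_self]
  push_cast
  -- expand each k-term
  set S1 : ℚ := ∑ t ∈ Icc 1 (n-1), (-1:ℚ)^(t+1) * ((n.factorial : ℚ) / t.factorial) with hS1
  have hterm : ∀ k ∈ Icc 1 (n-2),
      (k:ℚ) * ((yh (n-k) : ℤ) : ℚ) * (((n.choose (k+1) : ℕ)) : ℚ)
      = (∑ t ∈ Icc 1 (n-k-1), (-1:ℚ)^(t+1) * ((n.factorial : ℚ) / (k.factorial * t.factorial)))
        - (∑ t ∈ Icc 1 (n-k-1), (-1:ℚ)^(t+1) * ((n.factorial : ℚ) / ((k+1).factorial * t.factorial))) := by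
    intro k hk
    rw [Finset.mem_Icc] at hk
    rw [yh_cast]
    rw [show (n-k)-1 = n-k-1 from by omega]
    rw [Finset.mul_sum, Finset.sum_mul, ← Finset.sum_sub_distrib]
    apply Finset.sum_congr rfl
    intro t _
    have := key_frac (n := n) (k := k) (t := t) hk.1 hk.2 hn
    calc (k:ℚ) * ((-1:ℚ)^(t+1) * ((((n-k-1).factorial : ℚ)) / t.factorial)) * (((n.choose (k+1) : ℕ)) : ℚ)
        = (-1:ℚ)^(t+1) * ((k:ℚ) * (((n.choose (k+1) : ℕ)) : ℚ) * (((n-k-1).factorial : ℚ) / t.factorial)) := by ring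
      _ = (-1:ℚ)^(t+1) * ((n.factorial : ℚ) / (k.factorial * t.factorial))
            - (-1:ℚ)^(t+1) * ((n.factorial : ℚ) / ((k+1).factorial * t.factorial)) := by
          rw [this]; ring
  rw [Finset.sum_congr rfl hterm, Finset.sum_sub_distrib]
  -- first double sum is Pq n (n-1)
  have hP1 : ∑ k ∈ Icc 1 (n-2), (∑ t ∈ Icc 1 (n-k-1),
      (-1:ℚ)^(t+1) * ((n.factorial : ℚ) / (k.factorial * t.factorial))) = Pq n (n-1) := by
    rw [Pq, show (n-1)-1 = n-2 from by omega]
    apply Finset.sum_congr rfl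
    intro k _
    rw [show n-1-k = n-k-1 from by omega]
  -- second double sum is Pq n n - S1
  have hP2 : ∑ k ∈ Icc 1 (n-2), (∑ t ∈ Icc 1 (n-k-1),
      (-1:ℚ)^(t+1) * ((n.factorial : ℚ) / ((k+1).factorial * t.factorial)))
      = Pq n n - S1 := by
    have hre : ∑ k ∈ Icc 1 (n-2), (∑ t ∈ Icc 1 (n-k-1),
        (-1:ℚ)^(t+1) * ((n.factorial : ℚ) / ((k+1).factorial * t.factorial)))
        = ∑ i ∈ Icc 2 (n-1), (∑ t ∈ Icc 1 (n-i),
          (-1:ℚ)^(t+1) * ((n.factorial : ℚ) / (i.factorial * t.factorial))) := by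
      apply Finset.sum_nbij' (fun k => k + 1) (fun i => i - 1)
      · intro k hk; rw [Finset.mem_Icc] at hk ⊢; omega
      · intro i hi; rw [Finset.mem_Icc] at hi ⊢; omega
      · intro k hk; omega
      · intro i hi; rw [Finset.mem_Icc] at hi; omega
      · intro k hk
        rw [Finset.mem_Icc] at hk
        rw [show n-(k+1) = n-k-1 from by omega]
    rw [hre]
    have hPn : Pq n n = S1 + ∑ i ∈ Icc 2 (n-1), (∑ t ∈ Icc 1 (n-i),
        (-1:ℚ)^(t+1) * ((n.factorial : ℚ) / (i.factorial * t.factorial))) := by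
      rw [Pq]
      rw [show Icc 1 (n-1) = insert 1 (Icc 2 (n-1)) from by
        ext x; simp [Finset.mem_Icc, Finset.mem_insert]; omega]
      rw [Finset.sum_insert (by simp [Finset.mem_Icc])]
      congr 1
      rw [hS1]
      apply Finset.sum_congr rfl
      intro t _
      rw [Nat.factorial_one]
      norm_num
    rw [hPn]
    ring
  rw [hP1, hP2]
  -- Pq n n = Pq n (n-1) + (1 + (-1)^n)
  have hstep : Pq n n = Pq n (n-1) + (1 + (-1:ℚ)^n) := by
    have := Pq_succ n (n-1)
    rw [show n-1+1 = n from by omega] at this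
    rw [this]
    have : ((n.factorial : ℚ) / (n.factorial : ℚ)) = 1 := by
      apply div_self; positivity
    rw [this, mul_one]
  -- yh (n+1) in ℚ
  have hyh : ((yh (n+1) : ℤ) : ℚ) = S1 + (-1:ℚ)^(n+1) := by
    rw [yh_cast, show (n+1)-1 = n from rfl]
    rw [show Icc 1 n = insert n (Icc 1 (n-1)) from by
      ext x; simp [Finset.mem_Icc, Finset.mem_insert]; omega]
    rw [Finset.sum_insert (by simp [Finset.mem_Icc]; omega)]
    rw [div_self (by positivity : ((n.factorial:ℚ)) ≠ 0), mul_one, hS1]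
    ring
  rw [hstep, hyh]
  have hpow : (-1:ℚ)^(n+1) = -(-1:ℚ)^n := by
    rw [pow_succ]; ring
  rw [hpow]
  ring

lemma partial_T (N j : ℕ) (hN : 1 ≤ N) :
    ∑ j' ∈ range j, Fd N j'
      = (∑ k ∈ Icc 1 (N-2), (k:ℤ) * yh (N-k) * (j.choose (k+1) : ℤ)) + (j.choose N : ℤ) := by
  unfold Fd
  rw [Finset.sum_add_distrib, Finset.sum_comm]
  congr 1
  · apply Finset.sum_congr rfl
    intro k _
    rw [← Finset.mul_sum, hockey j k]
  · rw [hockey j (N-1), show N-1+1 = N from by omega]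

lemma R_identity (m j : ℕ) (hj : j ≤ m+3) :
    Fd (m+4) j = 2 * (∑ j' ∈ range j, Fd (m+3) j')
      + ∑ j' ∈ range j, (∑ t ∈ Icc j' (m+1), Fd (m+2) t) := by
  -- rewrite the inner Icc-sums using A_identity
  have hstep2 : ∀ j' ∈ range j, (∑ t ∈ Icc j' (m+1), Fd (m+2) t)
      = yh (m+3) - ∑ t ∈ range j', Fd (m+2) t := by
    intro j' hj'
    rw [Finset.mem_range] at hj'
    have hA : ∑ t ∈ range (m+2), Fd (m+2) t = yh (m+3) := A_identity (m+2) (by omega)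
    have hsplit : ∑ t ∈ Finset.Ico 0 j', Fd (m+2) t + ∑ t ∈ Finset.Ico j' (m+2), Fd (m+2) t
        = ∑ t ∈ Finset.Ico 0 (m+2), Fd (m+2) t :=
      Finset.sum_Ico_consecutive _ (by omega) (by omega)
    rw [← Finset.range_eq_Ico, ← Finset.range_eq_Ico] at hsplit
    rw [hA] at hsplit
    rw [show Icc j' (m+1) = Finset.Ico j' (m+2) from by
      ext x; simp [Finset.mem_Icc, Finset.mem_Ico]; omega]
    linarith [hsplit]
  rw [Finset.sum_congr rfl hstep2, Finset.sum_sub_distrib]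
  rw [Finset.sum_const, Finset.card_range]
  have hsum2 : ∀ j' ∈ range j, (∑ t ∈ range j', Fd (m+2) t)
      = (∑ k ∈ Icc 1 m, (k:ℤ) * yh (m+2-k) * (j'.choose (k+1) : ℤ)) + (j'.choose (m+2) : ℤ) := by
    intro j' _
    exact partial_T (m+2) j' (by omega)
  rw [Finset.sum_congr rfl hsum2, Finset.sum_add_distrib, Finset.sum_comm]
  rw [partial_T (m+3) j (by omega)]
  rw [hockey j (m+2)]
  have hin : ∀ k ∈ Icc 1 m, ∑ j' ∈ range j, (k:ℤ) * yh (m+2-k) * (j'.choose (k+1) : ℤ)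
      = (k:ℤ) * yh (m+2-k) * (j.choose (k+2) : ℤ) := by
    intro k _
    rw [← Finset.mul_sum, hockey j (k+1)]
  rw [Finset.sum_congr rfl hin]
  -- reindex the three sums to a common form
  have hA1 : ∑ k ∈ Icc 1 (m+1), (k:ℤ) * yh (m+3-k) * (j.choose (k+1) : ℤ)
      = ∑ K ∈ Icc 2 (m+2), ((K:ℤ)-1) * yh (m+4-K) * (j.choose K : ℤ) := by
    apply Finset.sum_nbij' (fun k => k + 1) (fun K => K - 1)
    · intro k hk; rw [Finset.mem_Icc] at hk ⊢; omega
    · intro K hK; rw [Finset.mem_Icc] at hK ⊢; omega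
    · intro k hk; omega
    · intro K hK; rw [Finset.mem_Icc] at hK; omega
    · intro k hk
      rw [Finset.mem_Icc] at hk
      rw [show m+4-(k+1) = m+3-k from by omega]
      push_cast
      ring
  have hA2 : ∑ k ∈ Icc 1 m, (k:ℤ) * yh (m+2-k) * (j.choose (k+2) : ℤ)
      = ∑ K ∈ Icc 3 (m+2), ((K:ℤ)-2) * yh (m+4-K) * (j.choose K : ℤ) := by
    apply Finset.sum_nbij' (fun k => k + 2) (fun K => K - 2)
    · intro k hk; rw [Finset.mem_Icc] at hk ⊢; omega
    · intro K hK; rw [Finset.mem_Icc] at hK ⊢; omega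
    · intro k hk; omega
    · intro K hK; rw [Finset.mem_Icc] at hK; omega
    · intro k hk
      rw [Finset.mem_Icc] at hk
      rw [show m+4-(k+2) = m+2-k from by omega]
      push_cast
      ring
  have hA2' : ∑ K ∈ Icc 3 (m+2), ((K:ℤ)-2) * yh (m+4-K) * (j.choose K : ℤ)
      = ∑ K ∈ Icc 2 (m+2), ((K:ℤ)-2) * yh (m+4-K) * (j.choose K : ℤ) := by
    rw [show Icc 2 (m+2) = insert 2 (Icc 3 (m+2)) from by
      ext x; simp only [Finset.mem_Icc, Finset.mem_insert]; omega]
    rw [Finset.sum_insert (by simp [Finset.mem_Icc])]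
    norm_num
  have hLHS : Fd (m+4) j
      = (1:ℤ) * yh (m+3) * (j.choose 1 : ℤ)
        + (∑ K ∈ Icc 2 (m+2), (K:ℤ) * yh (m+4-K) * (j.choose K : ℤ)) + (j.choose (m+3) : ℤ) := by
    unfold Fd
    rw [show (m+4)-2 = m+2 from by omega, show (m+4)-1 = m+3 from by omega,
      show Icc 1 (m+2) = insert 1 (Icc 2 (m+2)) from by
        ext x; simp only [Finset.mem_Icc, Finset.mem_insert]; omega,
      Finset.sum_insert (by simp [Finset.mem_Icc]),
      show m+4-1 = m+3 from by omega]
    push_cast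
    ring
  rw [show (m+3)-2 = m+1 from by omega, show m+2+1 = m+3 from by omega]
  rw [hLHS, hA1, hA2, hA2']
  have hcomb : ∑ K ∈ Icc 2 (m+2), (K:ℤ) * yh (m+4-K) * (j.choose K : ℤ)
      = 2 * (∑ K ∈ Icc 2 (m+2), ((K:ℤ)-1) * yh (m+4-K) * (j.choose K : ℤ))
        - ∑ K ∈ Icc 2 (m+2), ((K:ℤ)-2) * yh (m+4-K) * (j.choose K : ℤ) := by
    rw [Finset.mul_sum, ← Finset.sum_sub_distrib]
    apply Finset.sum_congr rfl
    intro K _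
    ring
  rw [hcomb]
  rw [Nat.choose_one_right, nsmul_eq_mul]
  push_cast
  ring

def aInt (n : ℕ) : ℤ :=
  ∑ s ∈ Icc 2 n, (1 + (-1 : ℤ) ^ s) * (Nat.descFactorial n (n - s) : ℤ)

lemma aInt_cast (n : ℕ) :
    ((aInt n : ℤ) : ℚ) = ∑ s ∈ Icc 2 n, (1 + (-1:ℚ)^s) * ((n.factorial : ℚ) / s.factorial) := by
  rw [aInt]
  push_cast
  apply Finset.sum_congr rfl
  intro s hs
  rw [Finset.mem_Icc] at hs
  rw [descFactorial_cast_rat hs.2]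

lemma key_frac2 {n k t : ℕ} (hk1 : 1 ≤ k) (hk2 : k ≤ n - 1) (hn : 1 ≤ n) :
    (k:ℚ) * ((n.choose k : ℕ) : ℚ) * (((n-k).factorial : ℚ) / (t.factorial : ℚ))
      = (n.factorial : ℚ) / (((k-1).factorial : ℚ) * (t.factorial : ℚ)) := by
  obtain ⟨k', rfl⟩ : ∃ k', k = k'+1 := ⟨k-1, by omega⟩
  have hkn : k'+1 ≤ n := by omega
  rw [Nat.cast_choose ℚ hkn, Nat.factorial_succ]
  have h1 : ((k'.factorial : ℚ)) ≠ 0 := by positivity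
  have h2 : ((t.factorial : ℚ)) ≠ 0 := by positivity
  have h3 : (((n-(k'+1)).factorial : ℚ)) ≠ 0 := by positivity
  have h4 : ((k':ℚ) + 1) ≠ 0 := by positivity
  rw [show (k'+1)-1 = k' from by omega]
  push_cast
  field_simp

lemma B_identity (n : ℕ) (hn : 2 ≤ n) :
    Fd (n+1) n - yh (n+1) = aInt n := by
  have hQ : ((Fd (n+1) n - yh (n+1) : ℤ) : ℚ) = ((aInt n : ℤ) : ℚ) →
      Fd (n+1) n - yh (n+1) = aInt n := fun h => by exact_mod_cast h
  apply hQ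
  push_cast
  set S1 : ℚ := ∑ t ∈ Icc 1 (n-1), (-1:ℚ)^(t+1) * ((n.factorial : ℚ) / t.factorial) with hS1
  -- Fd (n+1) n in ℚ
  have hFd : ((Fd (n+1) n : ℤ) : ℚ) = S1 + Pq n (n-1) + 1 := by
    rw [Fd, show (n+1)-2 = n-1 from by omega, show (n+1)-1 = n from rfl, Nat.choose_self]
    push_cast
    have hterm : ∀ k ∈ Icc 1 (n-1),
        (k:ℚ) * ((yh (n+1-k) : ℤ) : ℚ) * (((n.choose k : ℕ)) : ℚ)
        = ∑ t ∈ Icc 1 (n-k), (-1:ℚ)^(t+1) * ((n.factorial : ℚ) / ((k-1).factorial * t.factorial)) := by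
      intro k hk
      rw [Finset.mem_Icc] at hk
      rw [yh_cast, show (n+1-k)-1 = n-k from by omega]
      rw [Finset.mul_sum, Finset.sum_mul]
      apply Finset.sum_congr rfl
      intro t _
      have := key_frac2 (n := n) (k := k) (t := t) hk.1 hk.2 (by omega)
      calc (k:ℚ) * ((-1:ℚ)^(t+1) * (((n-k).factorial : ℚ) / t.factorial)) * (((n.choose k : ℕ)) : ℚ)
          = (-1:ℚ)^(t+1) * ((k:ℚ) * (((n.choose k : ℕ)) : ℚ) * (((n-k).factorial : ℚ) / t.factorial)) := by
            ring
        _ = (-1:ℚ)^(t+1) * ((n.factorial : ℚ) / ((k-1).factorial * t.factorial)) := by rw [this]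
    rw [Finset.sum_congr rfl hterm]
    -- reindex k-1 = i
    have hre : ∑ k ∈ Icc 1 (n-1), (∑ t ∈ Icc 1 (n-k),
        (-1:ℚ)^(t+1) * ((n.factorial : ℚ) / ((k-1).factorial * t.factorial)))
        = ∑ i ∈ Icc 0 (n-2), (∑ t ∈ Icc 1 (n-1-i),
          (-1:ℚ)^(t+1) * ((n.factorial : ℚ) / (i.factorial * t.factorial))) := by
      apply Finset.sum_nbij' (fun k => k - 1) (fun i => i + 1)
      · intro k hk; rw [Finset.mem_Icc] at hk ⊢; omega
      · intro i hi; rw [Finset.mem_Icc] at hi ⊢; omega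
      · intro k hk; rw [Finset.mem_Icc] at hk; omega
      · intro i hi; omega
      · intro k hk
        rw [Finset.mem_Icc] at hk
        rw [show n-1-(k-1) = n-k from by omega]
    rw [hre]
    rw [show Icc 0 (n-2) = insert 0 (Icc 1 (n-2)) from by
      ext x; simp only [Finset.mem_Icc, Finset.mem_insert]; omega]
    rw [Finset.sum_insert (by simp [Finset.mem_Icc])]
    rw [Pq, show (n-1)-1 = n-2 from by omega]
    have h0 : ∑ t ∈ Icc 1 (n-1-0), (-1:ℚ)^(t+1) * ((n.factorial : ℚ) / ((0:ℕ).factorial * t.factorial))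
        = S1 := by
      rw [hS1, show n-1-0 = n-1 from by omega]
      apply Finset.sum_congr rfl
      intro t _
      norm_num [Nat.factorial]
    rw [h0]
  have hyh : ((yh (n+1) : ℤ) : ℚ) = S1 + (-1:ℚ)^(n+1) := by
    rw [yh_cast, show (n+1)-1 = n from rfl]
    rw [show Icc 1 n = insert n (Icc 1 (n-1)) from by
      ext x; simp only [Finset.mem_Icc, Finset.mem_insert]; omega]
    rw [Finset.sum_insert (by simp [Finset.mem_Icc]; omega)]
    rw [div_self (by positivity : ((n.factorial:ℚ)) ≠ 0), mul_one, hS1]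
    ring
  have haInt : ((aInt n : ℤ) : ℚ) = Pq n (n-1) + (1 + (-1:ℚ)^n) := by
    rw [aInt_cast, ← Pq_eval]
    have := Pq_succ n (n-1)
    rw [show n-1+1 = n from by omega] at this
    rw [this, div_self (by positivity : ((n.factorial:ℚ)) ≠ 0), mul_one]
  rw [hFd, hyh, haInt]
  have hpow : (-1:ℚ)^(n+1) = -(-1:ℚ)^n := by
    rw [pow_succ]; ring
  rw [hpow]
  ring


lemma descFactorial_cast_real {n s : ℕ} (h : s ≤ n) :
    (Nat.descFactorial n (n - s) : ℝ) = (n.factorial : ℝ) / (s.factorial : ℝ) := by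
  have h2 : Nat.factorial (n - (n - s)) * n.descFactorial (n - s) = n.factorial :=
    Nat.factorial_mul_descFactorial (Nat.sub_le n s)
  rw [Nat.sub_sub_self h] at h2
  have h3 : (s.factorial : ℝ) * (n.descFactorial (n - s) : ℝ) = (n.factorial : ℝ) := by
    exact_mod_cast h2
  push_cast at h3
  have hs : (s.factorial : ℝ) ≠ 0 := by positivity
  field_simp
  linarith [h3]

lemma round_eq_of_abs_lt_half {x : ℝ} {m : ℤ} (h : |x - m| < 1/2) : round x = m := by
  rw [round_eq]
  rw [abs_lt] at h
  rw [Int.floor_eq_iff]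
  constructor
  · linarith [h.1]
  · push_cast; linarith [h.2]

lemma partD (n : ℕ) (hn : 4 ≤ n) :
    round ((Real.exp 1 - 2 + 1 / Real.exp 1) * n.factorial) = aInt n := by
  have hfac : (0:ℝ) < (n.factorial : ℝ) := by positivity
  apply round_eq_of_abs_lt_half
  set Sp : ℝ := ∑ i ∈ range (n+1), (1:ℝ)^i / i.factorial with hSp
  set Sm : ℝ := ∑ i ∈ range (n+1), (-1:ℝ)^i / i.factorial with hSm
  have hbp := Real.exp_bound (x := (1:ℝ)) (by norm_num) (n := n+1) (by omega)
  have hbm := Real.exp_bound (x := (-1:ℝ)) (by norm_num) (n := n+1) (by omega)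
  rw [abs_one, one_pow, one_mul] at hbp
  rw [abs_neg, abs_one, one_pow, one_mul] at hbm
  rw [← hSp] at hbp
  rw [← hSm] at hbm
  have hinv : 1 / Real.exp 1 = Real.exp (-1) := by
    rw [Real.exp_neg]; exact one_div _
  -- the exact part
  have hexact : ((Sp + Sm - 2) * n.factorial : ℝ) = ((aInt n : ℤ) : ℝ) := by
    have h1 : (Sp + Sm) * n.factorial
        = ∑ i ∈ range (n+1), (1 + (-1:ℝ)^i) * ((n.factorial : ℝ) / i.factorial) := by
      rw [hSp, hSm, ← Finset.sum_add_distrib, Finset.sum_mul]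
      apply Finset.sum_congr rfl
      intro i _
      rw [one_pow]
      have : (i.factorial : ℝ) ≠ 0 := by positivity
      field_simp
    rw [sub_mul, h1]
    have hsplit : (range (n+1)) = {0, 1} ∪ Icc 2 n := by
      ext i; simp only [Finset.mem_range, Finset.mem_Icc, Finset.mem_union,
        Finset.mem_insert, Finset.mem_singleton]; omega
    rw [hsplit, Finset.sum_union (by
      simp only [Finset.disjoint_left, Finset.mem_Icc, Finset.mem_insert, Finset.mem_singleton]
      intro a ha; rcases ha with h | h <;> omega)]
    have h01 : ∑ i ∈ ({0,1} : Finset ℕ), (1 + (-1:ℝ)^i) * ((n.factorial : ℝ) / i.factorial)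
        = 2 * n.factorial := by
      norm_num [Nat.factorial]
    rw [h01]
    have h2 : ∑ i ∈ Icc 2 n, (1 + (-1:ℝ)^i) * ((n.factorial : ℝ) / i.factorial)
        = ((aInt n : ℤ) : ℝ) := by
      rw [aInt]
      push_cast
      apply Finset.sum_congr rfl
      intro s hs
      rw [Finset.mem_Icc] at hs
      rw [descFactorial_cast_real hs.2]
    rw [h2]; ring
  have key : (Real.exp 1 - 2 + 1 / Real.exp 1) * n.factorial - ((aInt n : ℤ) : ℝ)
      = ((Real.exp 1 - Sp) + (Real.exp (-1) - Sm)) * n.factorial := by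
    rw [hinv, ← hexact]; ring
  rw [key]
  have hb2 : |((Real.exp 1 - Sp) + (Real.exp (-1) - Sm)) * (n.factorial:ℝ)|
      ≤ 2 * (((n:ℝ)+2) / ((n+1).factorial * (n+1))) * n.factorial := by
    rw [abs_mul, abs_of_pos hfac]
    apply mul_le_mul_of_nonneg_right _ (le_of_lt hfac)
    have habs : |(Real.exp 1 - Sp) + (Real.exp (-1) - Sm)|
        ≤ |Real.exp 1 - Sp| + |Real.exp (-1) - Sm| := abs_add_le _ _
    have hc : (((n+1).succ : ℕ) : ℝ) = (n:ℝ)+2 := by push_cast; ring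
    rw [hc] at hbp hbm
    push_cast at hbp hbm
    linarith
  have heq : 2 * (((n:ℝ)+2) / ((n+1).factorial * (n+1))) * (n.factorial : ℝ)
      = 2*((n:ℝ)+2) / (((n:ℝ)+1)*((n:ℝ)+1)) := by
    have hfe : ((n+1).factorial : ℝ) = ((n:ℝ)+1) * n.factorial := by
      rw [Nat.factorial_succ]; push_cast; ring
    rw [hfe]
    field_simp
  have hfin : 2*((n:ℝ)+2) / (((n:ℝ)+1)*((n:ℝ)+1)) < 1/2 := by
    rw [div_lt_iff₀ (by positivity)]
    have hcast : (4:ℝ) ≤ (n:ℝ) := by exact_mod_cast hn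
    nlinarith
  calc |((Real.exp 1 - Sp) + (Real.exp (-1) - Sm)) * (n.factorial:ℝ)|
      ≤ 2 * (((n:ℝ)+2) / ((n+1).factorial * (n+1))) * n.factorial := hb2
    _ = 2*((n:ℝ)+2) / (((n:ℝ)+1)*((n:ℝ)+1)) := heq
    _ < 1/2 := hfin

lemma row_formula : ∀ n, 2 ≤ n → ∀ j, j ≤ n - 1 → (GD n j : ℤ) = Fd n j := by
  intro n
  induction n using Nat.strong_induction_on with
  | _ n IH =>
    intro hn j hj
    match n, hn with
    | 2, _ =>
      interval_cases j
      · rw [GD20]; rw [show Fd 2 0 = 0 from by norm_num [Fd]]; rfl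
      · rw [GD21]; rw [show Fd 2 1 = 1 from by norm_num [Fd]]; rfl
    | 3, _ =>
      have h3 : GD 3 j = ∑ j' ∈ range j, (2 * GD 2 j' + GA 2 j') := GD_rec 2 j (by omega) (by omega)
      have hyh2 : yh 2 = 1 := by decide
      interval_cases j
      · rw [h3]
        norm_num [Fd]
      · rw [h3, Finset.sum_range_succ, Finset.sum_range_zero, GD20, GA20]
        norm_num [Fd, hyh2]
      · rw [h3, Finset.sum_range_succ, Finset.sum_range_succ, Finset.sum_range_zero,
          GD20, GA20, GD21, GA21]
        rw [show Fd 3 2 = 3 from by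
          rw [Fd]
          rw [show (3:ℕ)-2 = 1 from rfl, show (3:ℕ)-1 = 2 from rfl]
          rw [show Icc 1 1 = {1} from rfl, Finset.sum_singleton, hyh2]
          norm_num]
        norm_num
    | (m+4), _ =>
      have h1 : GD (m+4) j = ∑ j' ∈ range j, (2 * GD (m+3) j' + GA (m+3) j') :=
        GD_rec (m+3) j (by omega) (by omega)
      have h2 : ∀ j', GA (m+3) j' = ∑ t ∈ Icc j' (m+1), GD (m+2) t := by
        intro j'
        have := GA_rec (m+2) j' (by omega)
        rwa [show m+2-1 = m+1 from rfl] at this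
      have hcast : (GD (m+4) j : ℤ)
          = ∑ j' ∈ range j, (2 * (GD (m+3) j' : ℤ) + ∑ t ∈ Icc j' (m+1), (GD (m+2) t : ℤ)) := by
        rw [h1]
        push_cast
        apply Finset.sum_congr rfl
        intro j' _
        rw [h2 j']
        push_cast
        ring
      rw [hcast]
      have hIH1 : ∀ j' ∈ range j, (2 * (GD (m+3) j' : ℤ) + ∑ t ∈ Icc j' (m+1), (GD (m+2) t : ℤ))
          = 2 * Fd (m+3) j' + ∑ t ∈ Icc j' (m+1), Fd (m+2) t := by
        intro j' hj'
        rw [Finset.mem_range] at hj'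
        rw [IH (m+3) (by omega) (by omega) j' (by omega)]
        congr 1
        apply Finset.sum_congr rfl
        intro t ht
        rw [Finset.mem_Icc] at ht
        exact IH (m+2) (by omega) (by omega) t (by omega)
      rw [Finset.sum_congr rfl hIH1, Finset.sum_add_distrib, ← Finset.mul_sum]
      rw [R_identity m j (by omega)]

lemma alphaL_int (n : ℕ) (hn : 2 ≤ n) : (alphaL n : ℤ) = aInt n := by
  have e1 : alphaL n + (∑ j' ∈ range n, GD n j') = GD (n+1) n := by
    rw [alphaL_split n hn, GD_rec n n hn (le_refl n), ← Finset.sum_add_distrib]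
    apply Finset.sum_congr rfl
    intro j' _
    omega
  have e2 : GA (n+1) 0 = ∑ j' ∈ range n, GD n j' := by
    rw [GA_rec n 0 hn]
    apply Finset.sum_congr _ (fun _ _ => rfl)
    ext x; simp only [Finset.mem_Icc, Finset.mem_range]; omega
  have e3 : (GD (n+1) n : ℤ) = Fd (n+1) n :=
    row_formula (n+1) (by omega) n (by omega)
  have e4 : (∑ j' ∈ range n, GD n j' : ℕ) = (yh (n+1) : ℤ) → True := fun _ => trivial
  have e5 : ((∑ j' ∈ range n, GD n j' : ℕ) : ℤ) = yh (n+1) := by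
    push_cast
    rw [show ∑ j' ∈ range n, ((GD n j' : ℕ) : ℤ) = ∑ j' ∈ range n, Fd n j' from by
      apply Finset.sum_congr rfl
      intro j' hj'
      rw [Finset.mem_range] at hj'
      exact row_formula n hn j' (by omega)]
    exact A_identity n hn
  have : ((alphaL n : ℕ) : ℤ) = (GD (n+1) n : ℤ) - ((∑ j' ∈ range n, GD n j' : ℕ) : ℤ) := by
    rw [← e1]
    push_cast
    ring
  rw [this, e3, e5, B_identity n hn]

/-- For n ≥ 4, α_n is the nearest integer to (e − 2 + 1/e) · n!. -/
theorem alpha_eq_nearest (n : ℕ) (hn : 4 ≤ n) :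
    (alpha n : ℤ)
      = round ((Real.exp 1 - 2 + 1 / Real.exp 1) * n.factorial) := by
  rw [partD n hn]
  rw [show alpha n = alphaL n from (alpha_transfer n).trans rfl]
  exact alphaL_int n (by omega)
end
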